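/- Suppose a prediction strategy satisfies, on every round t, Σ_i q_i · w(R_{t-1,i}, C_{t-1,i}) · r_{t,i} = 0, where r_{t,i} ∈ [-1,1], R_{t,i} = Σ_{τ≤t} r_{τ,i}, and C_{t,i} = Σ_{τ≤t} |r_{τ,i}|. Then Σ_i q_i Φ(R_{T,i}, C_{T,i}) ≤ 1 + (3/2) Σ_i q_i (1 + ln(1 + C_{T,i})). -/

import Mathlib

noncomputable def Phi (R C : ℝ) : ℝ := Real.exp ((max R 0) ^ 2 / (3 * C))

noncomputable def w (R C : ℝ) : ℝ := (1 / 2) * (Phi (R + 1) (C + 1) - Phi (R - 1) (C + 1))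

lemma one_le_Phi {R C : ℝ} (hC : 0 ≤ C) : 1 ≤ Phi R C := by
  rw [Phi, ← Real.exp_zero]
  apply Real.exp_le_exp.2
  positivity

lemma Phi_of_nonpos {R C : ℝ} (hR : R ≤ 0) : Phi R C = 1 := by
  rw [Phi, max_eq_right hR]
  norm_num

lemma Phi_of_nonneg {R C : ℝ} (hR : 0 ≤ R) : Phi R C = Real.exp (R ^ 2 / (3 * C)) := by
  rw [Phi, max_eq_left hR]

/-- quadratic-over-linear chord inequality -/
lemma qol_chord {x1 y1 x2 y2 t : ℝ} (hy1 : 0 < y1) (hy2 : 0 < y2) (ht0 : 0 ≤ t) (ht1 : t ≤ 1) :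
    ((1 - t) * x1 + t * x2) ^ 2 / ((1 - t) * y1 + t * y2)
      ≤ (1 - t) * (x1 ^ 2 / y1) + t * (x2 ^ 2 / y2) := by
  have hD : 0 < (1 - t) * y1 + t * y2 := by nlinarith [mul_nonneg ht0 hy2.le, mul_nonneg (by linarith : (0:ℝ) ≤ 1 - t) hy1.le]
  rw [div_le_iff₀ hD, ← sub_nonneg]
  have expand : ((1 - t) * (x1 ^ 2 / y1) + t * (x2 ^ 2 / y2)) * ((1 - t) * y1 + t * y2)
      - ((1 - t) * x1 + t * x2) ^ 2
      = t * (1 - t) * ((x1 * y2 - x2 * y1) ^ 2 / (y1 * y2)) := by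
    field_simp
    ring
  rw [expand]
  exact mul_nonneg (mul_nonneg ht0 (by linarith))
    (div_nonneg (sq_nonneg (x1 * y2 - x2 * y1)) (mul_pos hy1 hy2).le)

lemma exp_chord {a b t : ℝ} (ht0 : 0 ≤ t) (ht1 : t ≤ 1) :
    Real.exp ((1 - t) * a + t * b) ≤ (1 - t) * Real.exp a + t * Real.exp b := by
  have := convexOn_exp.2 (Set.mem_univ a) (Set.mem_univ b) (by linarith : (0:ℝ) ≤ 1 - t) ht0
    (by ring)
  simpa using this

lemma Phi_zero_zero : Phi 0 0 = 1 := by norm_num [Phi]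

lemma chord_right {R C r : ℝ} (hC : 0 ≤ C) (hRC : |R| ≤ C) (hr0 : 0 ≤ r) (hr1 : r ≤ 1) :
    Phi (R + r) (C + r) ≤ (1 - r) * Phi R C + r * Phi (R + 1) (C + 1) := by
  have hB : 1 ≤ Phi (R + 1) (C + 1) := one_le_Phi (by linarith)
  rcases le_or_gt (R + 1) 0 with hcase | hcase
  · rw [Phi_of_nonpos hcase, Phi_of_nonpos (by linarith : R + r ≤ 0),
      Phi_of_nonpos (by linarith : R ≤ 0)]
    linarith
  rcases le_or_gt 0 R with hR | hR
  · -- R ≥ 0, smooth case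
    rcases eq_or_lt_of_le hC with hC0 | hC0
    · -- C = 0, hence R = 0
      rw [← hC0] at hRC ⊢
      have hR0 : R = 0 := abs_eq_zero.1 (le_antisymm hRC (abs_nonneg R))
      subst hR0
      simp only [zero_add]
      rw [Phi_zero_zero]
      rcases eq_or_lt_of_le hr0 with hr00 | hrpos
      · rw [← hr00, Phi_zero_zero]; linarith
      · have h1 : Phi r r = Real.exp (r / 3) := by
          rw [Phi_of_nonneg hrpos.le]
          congr 1
          field_simp
        have h2 : Phi 1 1 = Real.exp (1 / 3) := by
          rw [Phi_of_nonneg (by norm_num : (0:ℝ) ≤ 1)]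
          norm_num
        rw [h1, h2]
        have := exp_chord (a := 0) (b := 1/3) hr0 hr1
        rw [Real.exp_zero] at this
        calc Real.exp (r / 3) = Real.exp ((1 - r) * 0 + r * (1/3)) := by ring_nf
          _ ≤ _ := this
    · rw [Phi_of_nonneg (by linarith : 0 ≤ R + r), Phi_of_nonneg hR,
        Phi_of_nonneg (by linarith : 0 ≤ R + 1)]
      have hq := qol_chord (x1 := R) (y1 := 3 * C) (x2 := R + 1) (y2 := 3 * (C + 1))
        (by linarith) (by linarith) hr0 hr1 (t := r)
      have e1 : (1 - r) * R + r * (R + 1) = R + r := by ring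
      have e2 : (1 - r) * (3 * C) + r * (3 * (C + 1)) = 3 * (C + r) := by ring
      rw [e1, e2] at hq
      calc Real.exp ((R + r) ^ 2 / (3 * (C + r)))
          ≤ Real.exp ((1 - r) * (R ^ 2 / (3 * C)) + r * ((R + 1) ^ 2 / (3 * (C + 1)))) :=
            Real.exp_le_exp.2 hq
        _ ≤ _ := exp_chord hr0 hr1
  · -- -1 < R < 0 : kink case
    have hPhiRC : Phi R C = 1 := Phi_of_nonpos hR.le
    rw [hPhiRC]
    rcases le_or_gt (R + r) 0 with hsub | hsub
    · rw [Phi_of_nonpos hsub]; nlinarith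
    · have hRabs : -R ≤ C := by have := neg_le_abs R; linarith
      have hCR : 0 < C + r := by linarith
      have hu : (0:ℝ) < 1 + R := by linarith
      have hs : (0:ℝ) < r + R := by linarith
      set B := (R + 1) ^ 2 / (3 * (C + 1)) with hBdef
      have hBnn : 0 ≤ B := by positivity
      set θ := (r + R) / (1 + R) with hθdef
      have hθ0 : 0 ≤ θ := div_nonneg hs.le hu.le
      have hθr : θ ≤ r := by
        rw [div_le_iff₀ hu]
        nlinarith
      have hθ1 : θ ≤ 1 := le_trans hθr hr1
      have hkey : (r + R) * (C + 1) ≤ (1 + R) * (C + r) := by nlinarith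
      have hθB : θ * B = (r + R) * (R + 1) / (3 * (C + 1)) := by
        rw [hθdef, hBdef]
        field_simp
        ring
      have hexp : (R + r) ^ 2 / (3 * (C + r)) ≤ θ * B := by
        rw [hθB, div_le_div_iff₀ (by linarith) (by linarith)]
        nlinarith [mul_le_mul_of_nonneg_left hkey hs.le]
      have hPhiB : Phi (R + 1) (C + 1) = Real.exp B := by
        rw [Phi_of_nonneg hcase.le]
      have hec := exp_chord (a := 0) (b := B) hθ0 hθ1
      rw [Real.exp_zero] at hec
      have e0 : (1 - θ) * 0 + θ * B = θ * B := by ring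
      rw [e0] at hec
      calc Phi (R + r) (C + r) = Real.exp ((R + r) ^ 2 / (3 * (C + r))) :=
            Phi_of_nonneg hsub.le
        _ ≤ Real.exp (θ * B) := Real.exp_le_exp.2 hexp
        _ ≤ (1 - θ) * 1 + θ * Real.exp B := hec
        _ ≤ (1 - r) * 1 + r * Phi (R + 1) (C + 1) := by
            rw [hPhiB]
            nlinarith [Real.add_one_le_exp B]

lemma chord_left {R C s : ℝ} (hC : 0 ≤ C) (hRC : |R| ≤ C) (hs0 : 0 ≤ s) (hs1 : s ≤ 1) :
    Phi (R - s) (C + s) ≤ (1 - s) * Phi R C + s * Phi (R - 1) (C + 1) := by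
  have hA : 1 ≤ Phi R C := one_le_Phi hC
  rcases le_or_gt R 0 with hR | hR
  · rw [Phi_of_nonpos hR, Phi_of_nonpos (by linarith : R - s ≤ 0),
      Phi_of_nonpos (by linarith : R - 1 ≤ 0)]
    linarith
  · have hRC' : R ≤ C := le_trans (le_abs_self R) hRC
    have hC0 : 0 < C := lt_of_lt_of_le hR hRC'
    rcases le_or_gt 1 R with hR1 | hR1
    · -- R ≥ 1 : smooth
      rw [Phi_of_nonneg (by linarith : 0 ≤ R - s), Phi_of_nonneg hR.le,
        Phi_of_nonneg (by linarith : 0 ≤ R - 1)]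
      have hq := qol_chord (x1 := R) (y1 := 3 * C) (x2 := R - 1) (y2 := 3 * (C + 1))
        (by linarith) (by linarith) hs0 hs1 (t := s)
      have e1 : (1 - s) * R + s * (R - 1) = R - s := by ring
      have e2 : (1 - s) * (3 * C) + s * (3 * (C + 1)) = 3 * (C + s) := by ring
      rw [e1, e2] at hq
      calc Real.exp ((R - s) ^ 2 / (3 * (C + s)))
          ≤ Real.exp ((1 - s) * (R ^ 2 / (3 * C)) + s * ((R - 1) ^ 2 / (3 * (C + 1)))) :=
            Real.exp_le_exp.2 hq
        _ ≤ _ := exp_chord hs0 hs1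
    · -- 0 < R < 1 : kink
      rw [Phi_of_nonpos (by linarith : R - 1 ≤ 0)]
      rcases le_or_gt R s with hRs | hRs
      · rw [Phi_of_nonpos (by linarith : R - s ≤ 0)]
        nlinarith
      · -- s < R
        set x := R ^ 2 / (3 * C) with hxdef
        have hxnn : 0 ≤ x := by
          rw [hxdef]
          exact div_nonneg (sq_nonneg R) (by linarith)
        set θ := s / R with hθdef
        have hθ0 : 0 ≤ θ := div_nonneg hs0 hR.le
        have hθ1 : θ ≤ 1 := by
          rw [div_le_one hR]; exact hRs.le
        have hsθ : s ≤ θ := by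
          rw [hθdef, le_div_iff₀ hR]
          nlinarith
        have hq := qol_chord (x1 := R) (y1 := 3 * C) (x2 := 0) (y2 := 3 * (C + R))
          (by linarith) (by linarith) hθ0 hθ1 (t := θ)
        have e1 : (1 - θ) * R + θ * 0 = R - s := by
          rw [hθdef]; field_simp; ring
        have e2 : (1 - θ) * (3 * C) + θ * (3 * (C + R)) = 3 * (C + s) := by
          rw [hθdef]; field_simp; ring
        rw [e1, e2] at hq
        have hq2 : (R - s) ^ 2 / (3 * (C + s)) ≤ (1 - θ) * x + θ * 0 := by
          simpa using hq
        have hec := exp_chord (a := x) (b := 0) hθ0 hθ1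
        rw [Real.exp_zero] at hec
        calc Phi (R - s) (C + s) = Real.exp ((R - s) ^ 2 / (3 * (C + s))) :=
              Phi_of_nonneg (by linarith)
          _ ≤ Real.exp ((1 - θ) * x + θ * 0) := Real.exp_le_exp.2 hq2
          _ ≤ (1 - θ) * Real.exp x + θ * 1 := hec
          _ ≤ (1 - s) * Real.exp x + s * 1 := by
              nlinarith [Real.add_one_le_exp x]
          _ = (1 - s) * Phi R C + s * 1 := by rw [Phi_of_nonneg hR.le]

lemma exp_small_bound {t : ℝ} (ht0 : 0 ≤ t) (ht1 : t ≤ 1/3) :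
    Real.exp t ≤ 1 + (3/2) * t := by
  rcases eq_or_lt_of_le ht0 with h | h
  · rw [← h]; norm_num
  · have h1 : Real.exp t ≤ 1 / (1 - t) :=
      Real.exp_bound_div_one_sub_of_interval ht0 (by linarith)
    have h2 : 1 / (1 - t) ≤ 1 + (3/2) * t := by
      rw [div_le_iff₀ (by linarith : (0:ℝ) < 1 - t)]
      nlinarith
    linarith

lemma exp_mul_one_sub_le {x : ℝ} : Real.exp x * (1 - x) ≤ 1 := by
  have h := Real.add_one_le_exp (-x)
  have h2 : Real.exp x * Real.exp (-x) = 1 := by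
    rw [← Real.exp_add]; simp
  nlinarith [Real.exp_pos x]

set_option maxHeartbeats 1000000 in
lemma star_ineq {R C : ℝ} (hC : 0 ≤ C) (hRC : |R| ≤ C) :
    Phi (R + 1) (C + 1) + Phi (R - 1) (C + 1) ≤ 2 * Phi R C + 3 / (C + 1) := by
  have hC1 : (0:ℝ) < C + 1 := by linarith
  have hinv : (0:ℝ) ≤ 3 / (C + 1) := by positivity
  rcases le_or_gt (R + 1) 0 with hcase | hcase
  · rw [Phi_of_nonpos hcase, Phi_of_nonpos (by linarith : R - 1 ≤ 0)]
    have := one_le_Phi (R := R) hC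
    linarith
  rcases le_or_gt R 0 with hR | hR
  · -- -1 < R ≤ 0
    rw [Phi_of_nonpos hR, Phi_of_nonpos (by linarith : R - 1 ≤ 0),
      Phi_of_nonneg (by linarith : 0 ≤ R + 1)]
    set y := (R + 1) ^ 2 / (3 * (C + 1)) with hydef
    have hy0 : 0 ≤ y := by positivity
    have hy1 : y ≤ 1 / (3 * (C + 1)) := by
      rw [hydef]
      gcongr
      nlinarith
    have hy3 : y ≤ 1/3 := by
      calc y ≤ 1 / (3 * (C + 1)) := hy1
        _ ≤ 1/3 := by
          rw [div_le_div_iff₀ (by linarith) (by norm_num)]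
          linarith
    have h1 : Real.exp y ≤ 1 + (3/2) * y := exp_small_bound hy0 hy3
    have h2 : (3/2) * y ≤ 3 / (C + 1) := by
      have e1 : (3:ℝ)/2 * (1 / (3 * (C + 1))) = 1 / (2 * (C + 1)) := by
        field_simp
      have e2 : 1 / (2 * (C + 1)) ≤ 3 / (C + 1) := by
        rw [div_le_div_iff₀ (by linarith) hC1]
        linarith
      nlinarith
    linarith
  · -- 0 < R : main case; note C > 0
    have hRC' : R ≤ C := le_trans (le_abs_self R) hRC
    have hC0 : 0 < C := lt_of_lt_of_le hR hRC'
    set a := (R + 1) ^ 2 / (3 * (C + 1)) with hadef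
    set b := (R - 1) ^ 2 / (3 * (C + 1)) with hbdef
    set m := (R ^ 2 + 1) / (3 * (C + 1)) with hmdef
    set d := 2 * R / (3 * (C + 1)) with hddef
    set x := R ^ 2 / (3 * C) with hxdef
    clear_value a b m d x
    have hxnn : 0 ≤ x := by
      rw [hxdef]
      exact div_nonneg (sq_nonneg R) (by linarith)
    have ham : a = m + d := by rw [hadef, hmdef, hddef]; ring
    have hbm : b = m - d := by rw [hbdef, hmdef, hddef]; ring
    have hPhia : Phi (R + 1) (C + 1) = Real.exp a := by
      rw [hadef]; exact Phi_of_nonneg (by linarith)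
    have hmaxsq : (max (R - 1) 0) ^ 2 ≤ (R - 1) ^ 2 := by
      rcases le_or_gt (R - 1) 0 with h | h
      · rw [max_eq_right h]
        simpa using sq_nonneg (R - 1)
      · rw [max_eq_left h.le]
    have hPhib : Phi (R - 1) (C + 1) ≤ Real.exp b := by
      rw [Phi, hbdef]
      apply Real.exp_le_exp.2
      apply div_le_div_of_nonneg_right hmaxsq (by linarith)
    have hPhix : Phi R C = Real.exp x := by
      rw [hxdef]; exact Phi_of_nonneg hR.le
    -- combine via cosh bound
    have hcosh : Real.exp d + Real.exp (-d) ≤ 2 * Real.exp (d ^ 2 / 2) := by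
      have := Real.cosh_le_exp_half_sq d
      rw [Real.cosh_eq] at this
      linarith
    have hsum : Real.exp a + Real.exp b ≤ 2 * Real.exp (m + d ^ 2 / 2) := by
      rw [ham, hbm]
      have e1 : Real.exp (m + d) = Real.exp m * Real.exp d := Real.exp_add m d
      have e2 : Real.exp (m - d) = Real.exp m * Real.exp (-d) := by
        rw [← Real.exp_add]; ring_nf
      have e3 : Real.exp (m + d ^ 2 / 2) = Real.exp m * Real.exp (d ^ 2 / 2) :=
        Real.exp_add m _
      rw [e1, e2, e3]
      nlinarith [Real.exp_pos m]
    -- exponent bound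
    have hexp : m + d ^ 2 / 2 ≤ x + (1 - x) / (3 * (C + 1)) := by
      rw [hmdef, hddef, hxdef, ← sub_nonneg]
      have e : R ^ 2 / (3 * C) + (1 - R ^ 2 / (3 * C)) / (3 * (C + 1))
          - ((R ^ 2 + 1) / (3 * (C + 1)) + (2 * R / (3 * (C + 1))) ^ 2 / 2)
          = R ^ 2 * 2 / (9 * C * (C + 1) ^ 2) := by
        field_simp
        ring
      rw [e]
      apply div_nonneg (by positivity)
      nlinarith
    rw [hPhia, hPhix]
    set t := (1 - x) / (3 * (C + 1)) with htdef
    clear_value t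
    rcases le_or_gt 1 x with hx1 | hx1
    · have ht : t ≤ 0 := by
        rw [htdef]; exact div_nonpos_of_nonpos_of_nonneg (by linarith) (by linarith)
      have hmono : Real.exp (m + d ^ 2 / 2) ≤ Real.exp x :=
        Real.exp_le_exp.2 (by linarith)
      linarith
    · have ht0 : 0 ≤ t := by
        rw [htdef]; exact div_nonneg (by linarith) (by linarith)
      have ht3 : t ≤ 1/3 := by
        rw [htdef, div_le_div_iff₀ (by linarith) (by norm_num : (0:ℝ) < 3)]
        linarith
      have h1 : Real.exp t ≤ 1 + (3/2) * t := exp_small_bound ht0 ht3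
      have hmono : Real.exp (m + d ^ 2 / 2) ≤ Real.exp (x + t) :=
        Real.exp_le_exp.2 hexp
      have h2 : Real.exp (x + t) = Real.exp x * Real.exp t := Real.exp_add x t
      have e4 : 3 * t = (1 - x) / (C + 1) := by
        rw [htdef]
        field_simp
      have h5 : Real.exp x * (1 - x) ≤ 1 := exp_mul_one_sub_le
      have h6 : Real.exp x * (3 * t) ≤ 1 / (C + 1) := by
        rw [e4, mul_div_assoc']
        rw [div_le_div_iff₀ hC1 hC1]
        nlinarith [mul_le_mul_of_nonneg_right h5 hC1.le]
      have h7 : (1:ℝ) / (C + 1) ≤ 3 / (C + 1) := by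
        rw [div_le_div_iff₀ hC1 hC1]
        nlinarith
      have h8 : Real.exp x * Real.exp t ≤ Real.exp x * (1 + (3/2) * t) :=
        mul_le_mul_of_nonneg_left h1 (Real.exp_pos x).le
      nlinarith

lemma onestep {R C r : ℝ} (hC : 0 ≤ C) (hRC : |R| ≤ C) (hr : |r| ≤ 1) :
    Phi (R + r) (C + |r|) ≤ Phi R C + w R C * r + (3/2) * (|r| / (C + 1)) := by
  have hC1 : (0:ℝ) < C + 1 := by linarith
  have hstar := star_ineq hC hRC
  rcases le_or_gt 0 r with h | h
  · rw [abs_of_nonneg h] at *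
    have h1 := chord_right hC hRC h hr
    have h2 := mul_le_mul_of_nonneg_left hstar (by linarith : (0:ℝ) ≤ r / 2)
    have e : (3:ℝ)/2 * (r / (C + 1)) = r / 2 * (3 / (C + 1)) := by ring
    rw [w, e]
    nlinarith
  · rw [abs_of_neg h] at *
    have h1 := chord_left hC hRC (by linarith : (0:ℝ) ≤ -r) hr
    have h2 := mul_le_mul_of_nonneg_left hstar (by linarith : (0:ℝ) ≤ -r / 2)
    have e : (3:ℝ)/2 * (-r / (C + 1)) = -r / 2 * (3 / (C + 1)) := by ring
    have e2 : R + r = R - (-r) := by ring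
    rw [w, e, e2]
    nlinarith

/-- per-step log inequality -/
lemma log_step {S a : ℝ} (hS : 0 ≤ S) (ha0 : 0 ≤ a) (ha1 : a ≤ 1) :
    a / (1 + S) ≤ Real.log (1 + (S + a)) - Real.log (1 + S)
      + (1 / (1 + S) - 1 / (1 + (S + a))) := by
  have h1 : (0:ℝ) < 1 + S := by linarith
  have h2 : (0:ℝ) < 1 + (S + a) := by linarith
  have hlog : Real.log (1 + S) - Real.log (1 + (S + a)) ≤ (1 + S) / (1 + (S + a)) - 1 := by
    have := Real.log_le_sub_one_of_pos (show (0:ℝ) < (1 + S) / (1 + (S + a)) by positivity)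
    rwa [Real.log_div (by linarith) (by linarith)] at this
  have harith : a / (1 + S) - (1 / (1 + S) - 1 / (1 + (S + a)))
      ≤ 1 - (1 + S) / (1 + (S + a)) := by
    rw [← sub_nonneg]
    have e : 1 - (1 + S) / (1 + (S + a)) - (a / (1 + S) - (1 / (1 + S) - 1 / (1 + (S + a))))
        = a * (1 - a) / ((1 + S) * (1 + (S + a))) := by
      field_simp
      ring
    rw [e]
    exact div_nonneg (mul_nonneg ha0 (by linarith)) (mul_pos h1 h2).le
  linarith

lemma log_sum (a : ℕ → ℝ) (ha0 : ∀ t, 0 ≤ a t) (ha1 : ∀ t, a t ≤ 1) (T : ℕ) :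
    ∑ t ∈ Finset.range T, a t / (1 + ∑ τ ∈ Finset.range t, a τ)
      ≤ 1 + Real.log (1 + ∑ t ∈ Finset.range T, a t) := by
  have hSnn : ∀ n, 0 ≤ ∑ τ ∈ Finset.range n, a τ := fun n =>
    Finset.sum_nonneg fun τ _ => ha0 τ
  have key : ∀ n, ∑ t ∈ Finset.range n, a t / (1 + ∑ τ ∈ Finset.range t, a τ)
      ≤ Real.log (1 + ∑ τ ∈ Finset.range n, a τ) + (1 - 1 / (1 + ∑ τ ∈ Finset.range n, a τ)) := by
    intro n
    induction n with
    | zero => simp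
    | succ n ih =>
      rw [Finset.sum_range_succ, Finset.sum_range_succ (f := a)]
      have := log_step (hSnn n) (ha0 n) (ha1 n)
      linarith
  have hT := key T
  have : 0 ≤ 1 / (1 + ∑ τ ∈ Finset.range T, a τ) :=
    div_nonneg zero_le_one (by linarith [hSnn T])
  linarith

lemma log_sum' (a : ℕ → ℝ) (ha0 : ∀ t, 0 ≤ a t) (ha1 : ∀ t, a t ≤ 1) (T : ℕ) :
    ∑ t ∈ Finset.range T, a t / ((∑ τ ∈ Finset.range t, a τ) + 1)
      ≤ 1 + Real.log (1 + ∑ t ∈ Finset.range T, a t) := by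
  have e : ∑ t ∈ Finset.range T, a t / ((∑ τ ∈ Finset.range t, a τ) + 1)
      = ∑ t ∈ Finset.range T, a t / (1 + ∑ τ ∈ Finset.range t, a τ) :=
    Finset.sum_congr rfl fun t _ => by rw [add_comm]
  rw [e]
  exact log_sum a ha0 ha1 T

theorem final_potential_bound (N T : ℕ) (q : Fin N → ℝ) (r : ℕ → Fin N → ℝ)
    (hq0 : ∀ i, 0 ≤ q i) (hq1 : ∑ i, q i = 1)
    (hr : ∀ t i, |r t i| ≤ 1)
    (hbal : ∀ t < T, ∑ i, q i *
        w (∑ τ ∈ Finset.range t, r τ i) (∑ τ ∈ Finset.range t, |r τ i|) * r t i = 0) :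
    ∑ i, q i * Phi (∑ τ ∈ Finset.range T, r τ i) (∑ τ ∈ Finset.range T, |r τ i|)
      ≤ 1 + (3 / 2) * ∑ i, q i * (1 + Real.log (1 + ∑ τ ∈ Finset.range T, |r τ i|)) := by
  have hRabs : ∀ (n : ℕ) (i : Fin N),
      |∑ τ ∈ Finset.range n, r τ i| ≤ ∑ τ ∈ Finset.range n, |r τ i| :=
    fun n i => Finset.abs_sum_le_sum_abs _ _
  have hCnn : ∀ (n : ℕ) (i : Fin N), 0 ≤ ∑ τ ∈ Finset.range n, |r τ i| :=
    fun n i => Finset.sum_nonneg fun τ _ => abs_nonneg _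
  have key : ∀ n, n ≤ T →
      ∑ i, q i * Phi (∑ τ ∈ Finset.range n, r τ i) (∑ τ ∈ Finset.range n, |r τ i|)
        ≤ 1 + (3/2) * ∑ i, q i *
            ∑ t ∈ Finset.range n, |r t i| / ((∑ τ ∈ Finset.range t, |r τ i|) + 1) := by
    intro n
    induction n with
    | zero =>
      intro _
      simp [Phi_zero_zero, hq1]
    | succ n ih =>
      intro hn
      have hn' : n ≤ T := Nat.le_of_succ_le hn
      have ihn := ih hn'
      have hb := hbal n (lt_of_lt_of_le (Nat.lt_succ_self n) hn)
      have step : ∀ i : Fin N,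
          Phi (∑ τ ∈ Finset.range (n+1), r τ i) (∑ τ ∈ Finset.range (n+1), |r τ i|)
            ≤ Phi (∑ τ ∈ Finset.range n, r τ i) (∑ τ ∈ Finset.range n, |r τ i|)
              + w (∑ τ ∈ Finset.range n, r τ i) (∑ τ ∈ Finset.range n, |r τ i|) * r n i
              + (3/2) * (|r n i| / ((∑ τ ∈ Finset.range n, |r τ i|) + 1)) := by
        intro i
        rw [Finset.sum_range_succ, Finset.sum_range_succ (f := fun τ => |r τ i|)]
        exact onestep (hCnn n i) (hRabs n i) (hr n i)
      have h1 : ∑ i, q i * Phi (∑ τ ∈ Finset.range (n+1), r τ i)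
            (∑ τ ∈ Finset.range (n+1), |r τ i|)
          ≤ ∑ i, q i * (Phi (∑ τ ∈ Finset.range n, r τ i) (∑ τ ∈ Finset.range n, |r τ i|)
              + w (∑ τ ∈ Finset.range n, r τ i) (∑ τ ∈ Finset.range n, |r τ i|) * r n i
              + (3/2) * (|r n i| / ((∑ τ ∈ Finset.range n, |r τ i|) + 1))) :=
        Finset.sum_le_sum fun i _ => mul_le_mul_of_nonneg_left (step i) (hq0 i)
      have h2 : ∑ i, q i * (Phi (∑ τ ∈ Finset.range n, r τ i) (∑ τ ∈ Finset.range n, |r τ i|)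
              + w (∑ τ ∈ Finset.range n, r τ i) (∑ τ ∈ Finset.range n, |r τ i|) * r n i
              + (3/2) * (|r n i| / ((∑ τ ∈ Finset.range n, |r τ i|) + 1)))
          = (∑ i, q i * Phi (∑ τ ∈ Finset.range n, r τ i) (∑ τ ∈ Finset.range n, |r τ i|))
            + (∑ i, q i * w (∑ τ ∈ Finset.range n, r τ i) (∑ τ ∈ Finset.range n, |r τ i|)
                * r n i)
            + (3/2) * ∑ i, q i * (|r n i| / ((∑ τ ∈ Finset.range n, |r τ i|) + 1)) := by
        rw [Finset.mul_sum, ← Finset.sum_add_distrib, ← Finset.sum_add_distrib]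
        exact Finset.sum_congr rfl fun i _ => by ring
      have h3 : ∑ i, q i * ∑ t ∈ Finset.range (n+1),
            |r t i| / ((∑ τ ∈ Finset.range t, |r τ i|) + 1)
          = (∑ i, q i * ∑ t ∈ Finset.range n,
              |r t i| / ((∑ τ ∈ Finset.range t, |r τ i|) + 1))
            + ∑ i, q i * (|r n i| / ((∑ τ ∈ Finset.range n, |r τ i|) + 1)) := by
        rw [← Finset.sum_add_distrib]
        exact Finset.sum_congr rfl fun i _ => by
          rw [Finset.sum_range_succ]; ring
      rw [h3]
      linarith [h1, h2.le, h2.ge, ihn, hb]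
  have hkey := key T le_rfl
  have hlog : ∑ i, q i * ∑ t ∈ Finset.range T, |r t i| / ((∑ τ ∈ Finset.range t, |r τ i|) + 1)
      ≤ ∑ i, q i * (1 + Real.log (1 + ∑ τ ∈ Finset.range T, |r τ i|)) :=
    Finset.sum_le_sum fun i _ => mul_le_mul_of_nonneg_left
      (log_sum' (fun t => |r t i|) (fun t => abs_nonneg _) (fun t => hr t i) T) (hq0 i)
  linarith
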